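/- For all integers k₁, k₂ ≥ 1, one has the submultiplicativity t_{k₁+k₂} ≤ t_{k₁}·t_{k₂}. -/

import Mathlib

open scoped BigOperators

/-- The Cantor iterates `C_k = {Σ_{j<k} a_j M^j : a_j ∈ A} ⊆ {0,…,M^k-1}`. -/
def Ck (M : ℕ) (A : Finset ℕ) (k : ℕ) : Finset ℕ :=
  (Fintype.piFinset fun _ : Fin k => A).image fun a => ∑ j : Fin k, a j * M ^ (j : ℕ)

/-- The discrete Fourier transform of the indicator function of `S ⊆ Z_N`,
`F_N(1_S)(m) = N^{-1/2} Σ_{l<N} 1_S(l) exp(-2πi m l / N)`; it is `N`-periodic in `m`,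
so a residue `m ∈ Z_N` may be fed in via any integer representative. -/
noncomputable def dftInd (N : ℕ) (S : Finset ℕ) (m : ℕ) : ℂ :=
  ((1 : ℝ) / Real.sqrt N : ℝ) * ∑ l ∈ Finset.range N,
    (if l ∈ S then (1 : ℂ) else 0) * Complex.exp (-(2 * (Real.pi : ℂ) * Complex.I * m * l) / N)

/-- `t_k = (1/N) Σ_{j,ℓ ∈ Z_N} 1_{C_k}(j) 1_{C_k}(ℓ) |F_N(1_{C_k})(ℓ-j)|²`, `N = M^k`,
where `ℓ - j` is taken in `Z_N` (represented by `ℓ + N - j ≡ ℓ - j (mod N)`). -/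
noncomputable def tk (M : ℕ) (A : Finset ℕ) (k : ℕ) : ℝ :=
  ((1 : ℝ) / ((M ^ k : ℕ) : ℝ)) * ∑ j ∈ Finset.range (M ^ k), ∑ l ∈ Finset.range (M ^ k),
    (if j ∈ Ck M A k then (1 : ℝ) else 0) * (if l ∈ Ck M A k then (1 : ℝ) else 0) *
      ‖dftInd (M ^ k) (Ck M A k) (l + M ^ k - j)‖ ^ 2

/-- The additive energy of `X ⊆ Z_N`. -/
def addE (N : ℕ) (X : Finset ℕ) : ℕ :=
  (((X ×ˢ X) ×ˢ (X ×ˢ X)).filter fun p => (p.1.1 + p.1.2) % N = (p.2.1 + p.2.2) % N).card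

noncomputable def phaseE (θ : ℝ) : ℂ := Complex.exp ((-(2 * Real.pi * θ) : ℝ) * Complex.I)

lemma phaseE_add (a b : ℝ) : phaseE (a + b) = phaseE a * phaseE b := by
  unfold phaseE; rw [← Complex.exp_add]; congr 1; push_cast; ring

lemma phaseE_int (n : ℤ) : phaseE n = 1 := by
  unfold phaseE; rw [← Complex.exp_int_mul_two_pi_mul_I (-n)]; congr 1; push_cast; ring

lemma phaseE_nat (n : ℕ) : phaseE n = 1 := by
  have h : phaseE ((n : ℤ) : ℝ) = 1 := by
    unfold phaseE; rw [← Complex.exp_int_mul_two_pi_mul_I (-(n : ℤ))]; congr 1; push_cast; ring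
  simpa using h

lemma norm_phaseE (θ : ℝ) : ‖phaseE θ‖ = 1 := Complex.norm_exp_ofReal_mul_I _

lemma conj_phaseE (θ : ℝ) : starRingEnd ℂ (phaseE θ) = phaseE (-θ) := by
  unfold phaseE
  rw [← Complex.exp_conj, map_mul, Complex.conj_I, Complex.conj_ofReal]
  congr 1; push_cast; ring

noncomputable def Sl (N : ℕ) (C : Finset ℕ) (c : ℝ) : ℂ := ∑ a ∈ C, phaseE (c * a / N)

noncomputable def Tq (N : ℕ) (C : Finset ℕ) : ℝ :=
  ∑ j ∈ C, ∑ l ∈ C, ‖Sl N C ((l : ℝ) - j)‖ ^ 2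

lemma sq_norm_Sl (N : ℕ) (C : Finset ℕ) (c : ℝ) :
    ((‖Sl N C c‖ ^ 2 : ℝ) : ℂ) = ∑ a ∈ C, ∑ b ∈ C, phaseE (c * ((a : ℝ) - b) / N) := by
  have h1 : (∑ a ∈ C, ∑ b ∈ C, phaseE (c * ((a : ℝ) - b) / N))
      = Sl N C c * starRingEnd ℂ (Sl N C c) := by
    rw [Sl, map_sum, Finset.sum_mul_sum]
    refine Finset.sum_congr rfl fun a _ => Finset.sum_congr rfl fun b _ => ?_
    rw [conj_phaseE, ← phaseE_add]
    congr 1; ring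
  rw [h1, Complex.mul_conj]
  norm_cast
  rw [Complex.normSq_eq_norm_sq]

lemma Sl_period (N : ℕ) (hN : (N : ℝ) ≠ 0) (C : Finset ℕ) (c : ℝ) :
    Sl N C (c + N) = Sl N C c := by
  unfold Sl
  refine Finset.sum_congr rfl fun a _ => ?_
  have h : (c + N) * a / N = c * a / N + a := by field_simp
  rw [h, phaseE_add, phaseE_nat, mul_one]

lemma sum_rot3 {α β γ : Type*} {M : Type*} [AddCommMonoid M] (s : Finset α) (t : Finset β)
    (u : Finset γ) (f : α → β → γ → M) :
    ∑ x ∈ s, ∑ y ∈ t, ∑ z ∈ u, f x y z = ∑ y ∈ t, ∑ z ∈ u, ∑ x ∈ s, f x y z := by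
  rw [Finset.sum_comm]
  exact Finset.sum_congr rfl fun y _ => Finset.sum_comm

lemma Ck_subset_range (M : ℕ) (A : Finset ℕ) (hA : A ⊆ Finset.range M)
    (k : ℕ) : Ck M A k ⊆ Finset.range (M ^ k) := by
  induction k with
  | zero =>
    intro x hx
    simp only [Ck, Finset.mem_image] at hx
    obtain ⟨a, -, rfl⟩ := hx
    simp
  | succ n ih =>
    intro x hx
    simp only [Ck, Finset.mem_image, Fintype.mem_piFinset] at hx
    obtain ⟨a, ha, rfl⟩ := hx
    rw [Fin.sum_univ_succ]
    have h0 : a 0 < M := Finset.mem_range.mp (hA (ha 0))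
    have hS : (∑ j : Fin n, a j.succ * M ^ (j : ℕ)) < M ^ n := by
      have hmem : (∑ j : Fin n, a j.succ * M ^ (j : ℕ)) ∈ Ck M A n := by
        simp only [Ck, Finset.mem_image, Fintype.mem_piFinset]
        exact ⟨fun j => a j.succ, fun j => ha j.succ, rfl⟩
      simpa using ih hmem
    have hmul : (∑ j : Fin n, a j.succ * M ^ (j.succ : ℕ))
        = M * ∑ j : Fin n, a j.succ * M ^ (j : ℕ) := by
      rw [Finset.mul_sum]
      refine Finset.sum_congr rfl fun j _ => ?_
      rw [Fin.val_succ, pow_succ]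
      ring
    rw [Finset.mem_range]
    simp only [Fin.val_zero, pow_zero, mul_one]
    calc a 0 + ∑ j : Fin n, a j.succ * M ^ (j.succ : ℕ)
        = a 0 + M * ∑ j : Fin n, a j.succ * M ^ (j : ℕ) := by rw [hmul]
      _ < M + M * ∑ j : Fin n, a j.succ * M ^ (j : ℕ) := by omega
      _ = M * (∑ j : Fin n, a j.succ * M ^ (j : ℕ) + 1) := by ring
      _ ≤ M * M ^ n := Nat.mul_le_mul_left M (by omega)
      _ = M ^ (n + 1) := by ring

lemma Ck_add (M : ℕ) (A : Finset ℕ) (k k' : ℕ) :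
    Ck M A (k + k') = ((Ck M A k) ×ˢ (Ck M A k')).image (fun p => p.1 + M ^ k * p.2) := by
  ext x
  simp only [Ck, Finset.mem_image, Fintype.mem_piFinset, Finset.mem_product]
  constructor
  · rintro ⟨a, ha, rfl⟩
    refine ⟨(∑ j : Fin k, a (Fin.castAdd k' j) * M ^ (j : ℕ),
            ∑ j : Fin k', a (Fin.natAdd k j) * M ^ (j : ℕ)), ?_, ?_⟩
    · exact ⟨⟨fun j => a (Fin.castAdd k' j), fun j => ha _, rfl⟩,
             ⟨fun j => a (Fin.natAdd k j), fun j => ha _, rfl⟩⟩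
    · rw [Fin.sum_univ_add]
      simp only [Fin.coe_castAdd, Fin.coe_natAdd]
      rw [Finset.mul_sum]
      congr 1
      refine Finset.sum_congr rfl fun j _ => ?_
      rw [pow_add]; ring
  · rintro ⟨⟨y, z⟩, ⟨⟨a₁, ha₁, rfl⟩, ⟨a₂, ha₂, rfl⟩⟩, rfl⟩
    refine ⟨Fin.append a₁ a₂, ?_, ?_⟩
    · intro j
      refine Fin.addCases (fun i => ?_) (fun i => ?_) j
      · rw [Fin.append_left]; exact ha₁ i
      · rw [Fin.append_right]; exact ha₂ i
    · rw [Fin.sum_univ_add]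
      simp only [Fin.append_left, Fin.append_right, Fin.coe_castAdd, Fin.coe_natAdd]
      rw [Finset.mul_sum]
      congr 1
      refine Finset.sum_congr rfl fun j _ => ?_
      rw [pow_add]; ring

lemma sum_Ck_add {β : Type*} [AddCommMonoid β] (M : ℕ) (A : Finset ℕ)
    (hA : A ⊆ Finset.range M) (k k' : ℕ) (f : ℕ → β) :
    ∑ c ∈ Ck M A (k + k'), f c = ∑ p ∈ (Ck M A k) ×ˢ (Ck M A k'), f (p.1 + M ^ k * p.2) := by
  rw [Ck_add, Finset.sum_image]
  intro p hp q hq h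
  simp only [Finset.mem_coe, Finset.mem_product] at hp hq
  have hp1 : p.1 < M ^ k := Finset.mem_range.mp (Ck_subset_range M A hA k hp.1)
  have hq1 : q.1 < M ^ k := Finset.mem_range.mp (Ck_subset_range M A hA k hq.1)
  have h1 : p.1 = q.1 := by
    have h2 := congrArg (· % M ^ k) h
    simpa [Nat.add_mul_mod_self_left, Nat.mod_eq_of_lt hp1, Nat.mod_eq_of_lt hq1] using h2
  have h2 : p.2 = q.2 := by
    simp only [h1] at h
    have hMk : 0 < M ^ k := by omega
    exact Nat.eq_of_mul_eq_mul_left hMk (Nat.add_left_cancel h)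
  exact Prod.ext h1 h2

lemma key (N₁ N₂ : ℕ) (h₁ : 0 < N₁) (h₂ : 0 < N₂) (C C₁ C₂ : Finset ℕ)
    (hs₁ : ∀ f : ℕ → ℂ, ∑ c ∈ C, f c = ∑ p ∈ C₁ ×ˢ C₂, f (p.1 + N₁ * p.2))
    (hs₂ : ∀ f : ℕ → ℂ, ∑ c ∈ C, f c = ∑ p ∈ C₂ ×ˢ C₁, f (p.1 + N₂ * p.2)) :
    Tq (N₁ * N₂) C ≤ Tq N₁ C₁ * Tq N₂ C₂ := by
  have hN₁ : (N₁ : ℝ) ≠ 0 := Nat.cast_ne_zero.mpr h₁.ne'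
  have hN₂ : (N₂ : ℝ) ≠ 0 := Nat.cast_ne_zero.mpr h₂.ne'
  -- Step 1: complexify
  have hTq : ((Tq (N₁ * N₂) C : ℝ) : ℂ)
      = ∑ j ∈ C, ∑ l ∈ C, ∑ a ∈ C, ∑ b ∈ C,
          phaseE (((l : ℝ) - j) * (((a : ℝ)) - b) / ((N₁ * N₂ : ℕ) : ℝ)) := by
    rw [Tq, Complex.ofReal_sum]
    refine Finset.sum_congr rfl fun j _ => ?_
    rw [Complex.ofReal_sum]
    exact Finset.sum_congr rfl fun l _ => sq_norm_Sl _ _ _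
  -- Step 2: substitute the two decompositions and expand products
  have hH : ((Tq (N₁ * N₂) C : ℝ) : ℂ)
      = ∑ j₀ ∈ C₁, ∑ j₁ ∈ C₂, ∑ l₀ ∈ C₁, ∑ l₁ ∈ C₂, ∑ a₀ ∈ C₂, ∑ a₁ ∈ C₁, ∑ b₀ ∈ C₂, ∑ b₁ ∈ C₁,
          phaseE (((l₀ : ℝ) - j₀) * ((a₀ : ℝ) - b₀) / ((N₁ * N₂ : ℕ) : ℝ))
          * phaseE (((l₁ : ℝ) - j₁) * ((a₀ : ℝ) - b₀) / (N₂ : ℝ))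
          * phaseE (((l₀ : ℝ) - j₀) * ((a₁ : ℝ) - b₁) / (N₁ : ℝ)) := by
    rw [hTq, hs₁, Finset.sum_product]
    refine Finset.sum_congr rfl fun j₀ _ => Finset.sum_congr rfl fun j₁ _ => ?_
    rw [hs₁, Finset.sum_product]
    refine Finset.sum_congr rfl fun l₀ _ => Finset.sum_congr rfl fun l₁ _ => ?_
    rw [hs₂, Finset.sum_product]
    refine Finset.sum_congr rfl fun a₀ _ => Finset.sum_congr rfl fun a₁ _ => ?_
    rw [hs₂, Finset.sum_product]
    refine Finset.sum_congr rfl fun b₀ _ => Finset.sum_congr rfl fun b₁ _ => ?_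
    have e1 : ((((l₀ + N₁ * l₁ : ℕ) : ℝ)) - ((j₀ + N₁ * j₁ : ℕ) : ℝ))
          * (((a₀ + N₂ * a₁ : ℕ) : ℝ) - ((b₀ + N₂ * b₁ : ℕ) : ℝ)) / ((N₁ * N₂ : ℕ) : ℝ)
        = ((l₀ : ℝ) - j₀) * ((a₀ : ℝ) - b₀) / ((N₁ * N₂ : ℕ) : ℝ)
          + (((l₁ : ℝ) - j₁) * ((a₀ : ℝ) - b₀) / (N₂ : ℝ)
            + (((l₀ : ℝ) - j₀) * ((a₁ : ℝ) - b₁) / (N₁ : ℝ)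
              + ((((l₁ : ℤ) - j₁) * ((a₁ : ℤ) - b₁) : ℤ) : ℝ))) := by
      push_cast
      field_simp
      ring
    rw [e1, phaseE_add, phaseE_add, phaseE_add, phaseE_int, mul_one, ← mul_assoc]
  -- Step 3: evaluate inner sums
  have hH2 : ((Tq (N₁ * N₂) C : ℝ) : ℂ)
      = ∑ j₀ ∈ C₁, ∑ l₀ ∈ C₁, ∑ a₀ ∈ C₂, ∑ b₀ ∈ C₂,
          phaseE (((l₀ : ℝ) - j₀) * ((a₀ : ℝ) - b₀) / ((N₁ * N₂ : ℕ) : ℝ))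
          * ((‖Sl N₂ C₂ ((a₀ : ℝ) - b₀)‖ ^ 2 : ℝ) : ℂ)
          * ((‖Sl N₁ C₁ ((l₀ : ℝ) - j₀)‖ ^ 2 : ℝ) : ℂ) := by
    rw [hH]
    calc (∑ j₀ ∈ C₁, ∑ j₁ ∈ C₂, ∑ l₀ ∈ C₁, ∑ l₁ ∈ C₂, ∑ a₀ ∈ C₂, ∑ a₁ ∈ C₁, ∑ b₀ ∈ C₂, ∑ b₁ ∈ C₁,
          phaseE (((l₀ : ℝ) - j₀) * ((a₀ : ℝ) - b₀) / ((N₁ * N₂ : ℕ) : ℝ))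
          * phaseE (((l₁ : ℝ) - j₁) * ((a₀ : ℝ) - b₀) / (N₂ : ℝ))
          * phaseE (((l₀ : ℝ) - j₀) * ((a₁ : ℝ) - b₁) / (N₁ : ℝ)))
        = ∑ j₀ ∈ C₁, ∑ j₁ ∈ C₂, ∑ l₀ ∈ C₁, ∑ l₁ ∈ C₂, ∑ a₀ ∈ C₂, (∑ b₀ ∈ C₂,
            phaseE (((l₀ : ℝ) - j₀) * ((a₀ : ℝ) - b₀) / ((N₁ * N₂ : ℕ) : ℝ))
            * phaseE (((l₁ : ℝ) - j₁) * ((a₀ : ℝ) - b₀) / (N₂ : ℝ)))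
            * ((‖Sl N₁ C₁ ((l₀ : ℝ) - j₀)‖ ^ 2 : ℝ) : ℂ) := by
          refine Finset.sum_congr rfl fun j₀ _ => Finset.sum_congr rfl fun j₁ _ =>
            Finset.sum_congr rfl fun l₀ _ => Finset.sum_congr rfl fun l₁ _ =>
            Finset.sum_congr rfl fun a₀ _ => ?_
          calc (∑ a₁ ∈ C₁, ∑ b₀ ∈ C₂, ∑ b₁ ∈ C₁,
                phaseE (((l₀ : ℝ) - j₀) * ((a₀ : ℝ) - b₀) / ((N₁ * N₂ : ℕ) : ℝ))
                * phaseE (((l₁ : ℝ) - j₁) * ((a₀ : ℝ) - b₀) / (N₂ : ℝ))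
                * phaseE (((l₀ : ℝ) - j₀) * ((a₁ : ℝ) - b₁) / (N₁ : ℝ)))
              = ∑ a₁ ∈ C₁, (∑ b₀ ∈ C₂,
                  phaseE (((l₀ : ℝ) - j₀) * ((a₀ : ℝ) - b₀) / ((N₁ * N₂ : ℕ) : ℝ))
                  * phaseE (((l₁ : ℝ) - j₁) * ((a₀ : ℝ) - b₀) / (N₂ : ℝ)))
                  * (∑ b₁ ∈ C₁, phaseE (((l₀ : ℝ) - j₀) * ((a₁ : ℝ) - b₁) / (N₁ : ℝ))) := by
                refine Finset.sum_congr rfl fun a₁ _ => ?_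
                rw [Finset.sum_mul]
                exact Finset.sum_congr rfl fun b₀ _ => (Finset.mul_sum _ _ _).symm
            _ = (∑ b₀ ∈ C₂,
                  phaseE (((l₀ : ℝ) - j₀) * ((a₀ : ℝ) - b₀) / ((N₁ * N₂ : ℕ) : ℝ))
                  * phaseE (((l₁ : ℝ) - j₁) * ((a₀ : ℝ) - b₀) / (N₂ : ℝ)))
                  * (∑ a₁ ∈ C₁, ∑ b₁ ∈ C₁, phaseE (((l₀ : ℝ) - j₀) * ((a₁ : ℝ) - b₁) / (N₁ : ℝ))) := by
                rw [Finset.mul_sum]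
            _ = (∑ b₀ ∈ C₂,
                  phaseE (((l₀ : ℝ) - j₀) * ((a₀ : ℝ) - b₀) / ((N₁ * N₂ : ℕ) : ℝ))
                  * phaseE (((l₁ : ℝ) - j₁) * ((a₀ : ℝ) - b₀) / (N₂ : ℝ)))
                  * ((‖Sl N₁ C₁ ((l₀ : ℝ) - j₀)‖ ^ 2 : ℝ) : ℂ) := by
                rw [← sq_norm_Sl]
      _ = ∑ j₀ ∈ C₁, ∑ l₀ ∈ C₁, ∑ j₁ ∈ C₂, ∑ l₁ ∈ C₂, ∑ a₀ ∈ C₂, (∑ b₀ ∈ C₂,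
            phaseE (((l₀ : ℝ) - j₀) * ((a₀ : ℝ) - b₀) / ((N₁ * N₂ : ℕ) : ℝ))
            * phaseE (((l₁ : ℝ) - j₁) * ((a₀ : ℝ) - b₀) / (N₂ : ℝ)))
            * ((‖Sl N₁ C₁ ((l₀ : ℝ) - j₀)‖ ^ 2 : ℝ) : ℂ) := by
          exact Finset.sum_congr rfl fun j₀ _ => Finset.sum_comm
      _ = ∑ j₀ ∈ C₁, ∑ l₀ ∈ C₁, ∑ a₀ ∈ C₂, ∑ j₁ ∈ C₂, ∑ l₁ ∈ C₂, (∑ b₀ ∈ C₂,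
            phaseE (((l₀ : ℝ) - j₀) * ((a₀ : ℝ) - b₀) / ((N₁ * N₂ : ℕ) : ℝ))
            * phaseE (((l₁ : ℝ) - j₁) * ((a₀ : ℝ) - b₀) / (N₂ : ℝ)))
            * ((‖Sl N₁ C₁ ((l₀ : ℝ) - j₀)‖ ^ 2 : ℝ) : ℂ) := by
          refine Finset.sum_congr rfl fun j₀ _ => Finset.sum_congr rfl fun l₀ _ => ?_
          rw [sum_rot3, sum_rot3]
      _ = ∑ j₀ ∈ C₁, ∑ l₀ ∈ C₁, ∑ a₀ ∈ C₂, ∑ b₀ ∈ C₂, ∑ j₁ ∈ C₂, ∑ l₁ ∈ C₂,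
            (phaseE (((l₀ : ℝ) - j₀) * ((a₀ : ℝ) - b₀) / ((N₁ * N₂ : ℕ) : ℝ))
            * phaseE (((l₁ : ℝ) - j₁) * ((a₀ : ℝ) - b₀) / (N₂ : ℝ)))
            * ((‖Sl N₁ C₁ ((l₀ : ℝ) - j₀)‖ ^ 2 : ℝ) : ℂ) := by
          refine Finset.sum_congr rfl fun j₀ _ => Finset.sum_congr rfl fun l₀ _ =>
            Finset.sum_congr rfl fun a₀ _ => ?_
          rw [← sum_rot3, ← sum_rot3]
          refine Finset.sum_congr rfl fun j₁ _ => Finset.sum_congr rfl fun l₁ _ => ?_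
          rw [Finset.sum_mul]
      _ = ∑ j₀ ∈ C₁, ∑ l₀ ∈ C₁, ∑ a₀ ∈ C₂, ∑ b₀ ∈ C₂,
            phaseE (((l₀ : ℝ) - j₀) * ((a₀ : ℝ) - b₀) / ((N₁ * N₂ : ℕ) : ℝ))
            * ((‖Sl N₂ C₂ ((a₀ : ℝ) - b₀)‖ ^ 2 : ℝ) : ℂ)
            * ((‖Sl N₁ C₁ ((l₀ : ℝ) - j₀)‖ ^ 2 : ℝ) : ℂ) := by
          refine Finset.sum_congr rfl fun j₀ _ => Finset.sum_congr rfl fun l₀ _ =>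
            Finset.sum_congr rfl fun a₀ _ => Finset.sum_congr rfl fun b₀ _ => ?_
          have h3 : (∑ j₁ ∈ C₂, ∑ l₁ ∈ C₂,
              phaseE (((l₁ : ℝ) - j₁) * ((a₀ : ℝ) - b₀) / (N₂ : ℝ)))
              = ((‖Sl N₂ C₂ ((a₀ : ℝ) - b₀)‖ ^ 2 : ℝ) : ℂ) := by
            rw [Finset.sum_comm, sq_norm_Sl]
            exact Finset.sum_congr rfl fun x _ => Finset.sum_congr rfl fun y _ => by
              congr 1; ring
          calc (∑ j₁ ∈ C₂, ∑ l₁ ∈ C₂,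
                (phaseE (((l₀ : ℝ) - j₀) * ((a₀ : ℝ) - b₀) / ((N₁ * N₂ : ℕ) : ℝ))
                * phaseE (((l₁ : ℝ) - j₁) * ((a₀ : ℝ) - b₀) / (N₂ : ℝ)))
                * ((‖Sl N₁ C₁ ((l₀ : ℝ) - j₀)‖ ^ 2 : ℝ) : ℂ))
              = ∑ j₁ ∈ C₂, ∑ l₁ ∈ C₂,
                (phaseE (((l₀ : ℝ) - j₀) * ((a₀ : ℝ) - b₀) / ((N₁ * N₂ : ℕ) : ℝ))
                * ((‖Sl N₁ C₁ ((l₀ : ℝ) - j₀)‖ ^ 2 : ℝ) : ℂ))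
                * phaseE (((l₁ : ℝ) - j₁) * ((a₀ : ℝ) - b₀) / (N₂ : ℝ)) := by
                exact Finset.sum_congr rfl fun j₁ _ => Finset.sum_congr rfl fun l₁ _ => by ring
            _ = (phaseE (((l₀ : ℝ) - j₀) * ((a₀ : ℝ) - b₀) / ((N₁ * N₂ : ℕ) : ℝ))
                * ((‖Sl N₁ C₁ ((l₀ : ℝ) - j₀)‖ ^ 2 : ℝ) : ℂ))
                * ∑ j₁ ∈ C₂, ∑ l₁ ∈ C₂,
                  phaseE (((l₁ : ℝ) - j₁) * ((a₀ : ℝ) - b₀) / (N₂ : ℝ)) := by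
                rw [Finset.mul_sum]
                exact Finset.sum_congr rfl fun j₁ _ => (Finset.mul_sum _ _ _).symm
            _ = _ := by rw [h3]; ring
  -- Step 4: take real parts and bound
  have hre : Tq (N₁ * N₂) C
      = (∑ j₀ ∈ C₁, ∑ l₀ ∈ C₁, ∑ a₀ ∈ C₂, ∑ b₀ ∈ C₂,
          phaseE (((l₀ : ℝ) - j₀) * ((a₀ : ℝ) - b₀) / ((N₁ * N₂ : ℕ) : ℝ))
          * ((‖Sl N₂ C₂ ((a₀ : ℝ) - b₀)‖ ^ 2 : ℝ) : ℂ)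
          * ((‖Sl N₁ C₁ ((l₀ : ℝ) - j₀)‖ ^ 2 : ℝ) : ℂ)).re := by
    rw [← hH2, Complex.ofReal_re]
  rw [hre]
  have hbound : (∑ j₀ ∈ C₁, ∑ l₀ ∈ C₁, ∑ a₀ ∈ C₂, ∑ b₀ ∈ C₂,
          phaseE (((l₀ : ℝ) - j₀) * ((a₀ : ℝ) - b₀) / ((N₁ * N₂ : ℕ) : ℝ))
          * ((‖Sl N₂ C₂ ((a₀ : ℝ) - b₀)‖ ^ 2 : ℝ) : ℂ)
          * ((‖Sl N₁ C₁ ((l₀ : ℝ) - j₀)‖ ^ 2 : ℝ) : ℂ)).re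
      ≤ ∑ j₀ ∈ C₁, ∑ l₀ ∈ C₁, ∑ a₀ ∈ C₂, ∑ b₀ ∈ C₂,
          ‖Sl N₂ C₂ ((a₀ : ℝ) - b₀)‖ ^ 2 * ‖Sl N₁ C₁ ((l₀ : ℝ) - j₀)‖ ^ 2 := by
    simp only [Complex.re_sum]
    refine Finset.sum_le_sum fun j₀ _ => Finset.sum_le_sum fun l₀ _ =>
      Finset.sum_le_sum fun a₀ _ => Finset.sum_le_sum fun b₀ _ => ?_
    calc (phaseE (((l₀ : ℝ) - j₀) * ((a₀ : ℝ) - b₀) / ((N₁ * N₂ : ℕ) : ℝ))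
          * ((‖Sl N₂ C₂ ((a₀ : ℝ) - b₀)‖ ^ 2 : ℝ) : ℂ)
          * ((‖Sl N₁ C₁ ((l₀ : ℝ) - j₀)‖ ^ 2 : ℝ) : ℂ)).re
        ≤ ‖phaseE (((l₀ : ℝ) - j₀) * ((a₀ : ℝ) - b₀) / ((N₁ * N₂ : ℕ) : ℝ))
          * ((‖Sl N₂ C₂ ((a₀ : ℝ) - b₀)‖ ^ 2 : ℝ) : ℂ)
          * ((‖Sl N₁ C₁ ((l₀ : ℝ) - j₀)‖ ^ 2 : ℝ) : ℂ)‖ := Complex.re_le_norm _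
      _ = ‖Sl N₂ C₂ ((a₀ : ℝ) - b₀)‖ ^ 2 * ‖Sl N₁ C₁ ((l₀ : ℝ) - j₀)‖ ^ 2 := by
          rw [norm_mul, norm_mul, norm_phaseE, one_mul, Complex.norm_real, Complex.norm_real,
            Real.norm_eq_abs, Real.norm_eq_abs, abs_of_nonneg (sq_nonneg _),
            abs_of_nonneg (sq_nonneg _)]
  refine hbound.trans (le_of_eq ?_)
  calc (∑ j₀ ∈ C₁, ∑ l₀ ∈ C₁, ∑ a₀ ∈ C₂, ∑ b₀ ∈ C₂,
        ‖Sl N₂ C₂ ((a₀ : ℝ) - b₀)‖ ^ 2 * ‖Sl N₁ C₁ ((l₀ : ℝ) - j₀)‖ ^ 2)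
      = ∑ j₀ ∈ C₁, ∑ l₀ ∈ C₁,
        (∑ a₀ ∈ C₂, ∑ b₀ ∈ C₂, ‖Sl N₂ C₂ ((a₀ : ℝ) - b₀)‖ ^ 2)
          * ‖Sl N₁ C₁ ((l₀ : ℝ) - j₀)‖ ^ 2 := by
        refine Finset.sum_congr rfl fun j₀ _ => Finset.sum_congr rfl fun l₀ _ => ?_
        rw [Finset.sum_mul]
        exact Finset.sum_congr rfl fun a₀ _ => (Finset.sum_mul _ _ _).symm
    _ = (∑ a₀ ∈ C₂, ∑ b₀ ∈ C₂, ‖Sl N₂ C₂ ((a₀ : ℝ) - b₀)‖ ^ 2)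
          * ∑ j₀ ∈ C₁, ∑ l₀ ∈ C₁, ‖Sl N₁ C₁ ((l₀ : ℝ) - j₀)‖ ^ 2 := by
        rw [Finset.mul_sum]
        exact Finset.sum_congr rfl fun j₀ _ => (Finset.mul_sum _ _ _).symm
    _ = Tq N₂ C₂ * Tq N₁ C₁ := by
        rw [Tq, Tq]
        exact congrArg₂ (· * ·) Finset.sum_comm rfl
    _ = Tq N₁ C₁ * Tq N₂ C₂ := mul_comm _ _

lemma dft_norm (N : ℕ) (hN : 0 < N) (S : Finset ℕ) (hS : S ⊆ Finset.range N) (m : ℕ) :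
    ‖dftInd N S m‖ ^ 2 = ‖Sl N S (m : ℝ)‖ ^ 2 / (N : ℝ) := by
  have hW : (∑ l ∈ Finset.range N, (if l ∈ S then (1 : ℂ) else 0)
        * Complex.exp (-(2 * (Real.pi : ℂ) * Complex.I * m * l) / N)) = Sl N S (m : ℝ) := by
    rw [Sl]
    calc (∑ l ∈ Finset.range N, (if l ∈ S then (1 : ℂ) else 0)
          * Complex.exp (-(2 * (Real.pi : ℂ) * Complex.I * m * l) / N))
        = ∑ l ∈ Finset.range N, (if l ∈ S then phaseE ((m : ℝ) * l / N) else 0) := by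
          refine Finset.sum_congr rfl fun l _ => ?_
          by_cases hl : l ∈ S
          · simp only [hl, if_true, one_mul]
            unfold phaseE
            congr 1
            push_cast
            ring
          · simp [hl]
      _ = ∑ l ∈ Finset.range N ∩ S, phaseE ((m : ℝ) * l / N) := Finset.sum_ite_mem _ _ _
      _ = ∑ l ∈ S, phaseE ((m : ℝ) * l / N) := by
          rw [Finset.inter_eq_right.mpr hS]
  rw [dftInd, hW, norm_mul, mul_pow, Complex.norm_real, Real.norm_eq_abs]
  have h1 : |((1 : ℝ) / Real.sqrt N)| ^ 2 = 1 / (N : ℝ) := by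
    rw [sq_abs, div_pow, one_pow, Real.sq_sqrt (by positivity : (0:ℝ) ≤ (N : ℝ))]
  rw [h1]
  ring

lemma tk_eq (M : ℕ) (hM : 2 ≤ M) (A : Finset ℕ) (hA : A ⊆ Finset.range M)
    (hsub : ∀ k, Ck M A k ⊆ Finset.range (M ^ k)) (k : ℕ) :
    tk M A k = Tq (M ^ k) (Ck M A k) / ((M ^ k : ℕ) : ℝ) ^ 2 := by
  have hN : 0 < M ^ k := Nat.pow_pos (by omega)
  have hNR : (0 : ℝ) < ((M ^ k : ℕ) : ℝ) := by exact_mod_cast hN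
  rw [tk]
  have step1 : (∑ j ∈ Finset.range (M ^ k), ∑ l ∈ Finset.range (M ^ k),
      (if j ∈ Ck M A k then (1 : ℝ) else 0) * (if l ∈ Ck M A k then (1 : ℝ) else 0) *
        ‖dftInd (M ^ k) (Ck M A k) (l + M ^ k - j)‖ ^ 2)
      = ∑ j ∈ Ck M A k, ∑ l ∈ Ck M A k, ‖dftInd (M ^ k) (Ck M A k) (l + M ^ k - j)‖ ^ 2 := by
    calc (∑ j ∈ Finset.range (M ^ k), ∑ l ∈ Finset.range (M ^ k),
        (if j ∈ Ck M A k then (1 : ℝ) else 0) * (if l ∈ Ck M A k then (1 : ℝ) else 0) *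
          ‖dftInd (M ^ k) (Ck M A k) (l + M ^ k - j)‖ ^ 2)
        = ∑ j ∈ Finset.range (M ^ k), (if j ∈ Ck M A k then
            (∑ l ∈ Finset.range (M ^ k), (if l ∈ Ck M A k then
              ‖dftInd (M ^ k) (Ck M A k) (l + M ^ k - j)‖ ^ 2 else 0)) else 0) := by
          refine Finset.sum_congr rfl fun j _ => ?_
          by_cases hj : j ∈ Ck M A k
          · simp only [hj, if_true, one_mul]
            refine Finset.sum_congr rfl fun l _ => ?_
            by_cases hl : l ∈ Ck M A k <;> simp [hl]
          · simp [hj]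
      _ = ∑ j ∈ Finset.range (M ^ k) ∩ Ck M A k,
            (∑ l ∈ Finset.range (M ^ k), (if l ∈ Ck M A k then
              ‖dftInd (M ^ k) (Ck M A k) (l + M ^ k - j)‖ ^ 2 else 0)) := Finset.sum_ite_mem _ _ _
      _ = ∑ j ∈ Ck M A k, ∑ l ∈ Ck M A k, ‖dftInd (M ^ k) (Ck M A k) (l + M ^ k - j)‖ ^ 2 := by
          rw [Finset.inter_eq_right.mpr (hsub k)]
          refine Finset.sum_congr rfl fun j _ => ?_
          rw [Finset.sum_ite_mem, Finset.inter_eq_right.mpr (hsub k)]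
  rw [step1]
  have step2 : ∀ j ∈ Ck M A k, ∀ l ∈ Ck M A k,
      ‖dftInd (M ^ k) (Ck M A k) (l + M ^ k - j)‖ ^ 2
      = ‖Sl (M ^ k) (Ck M A k) ((l : ℝ) - j)‖ ^ 2 / ((M ^ k : ℕ) : ℝ) := by
    intro j hj l hl
    have hjN : j < M ^ k := Finset.mem_range.mp (hsub k hj)
    rw [dft_norm (M ^ k) hN (Ck M A k) (hsub k)]
    congr 2
    have hc : ((l + M ^ k - j : ℕ) : ℝ) = ((l : ℝ) - j) + ((M ^ k : ℕ) : ℝ) := by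
      rw [Nat.cast_sub (by omega : j ≤ l + M ^ k)]
      push_cast
      ring
    rw [hc, Sl_period _ hNR.ne']
  calc ((1 : ℝ) / ((M ^ k : ℕ) : ℝ)) * ∑ j ∈ Ck M A k, ∑ l ∈ Ck M A k,
        ‖dftInd (M ^ k) (Ck M A k) (l + M ^ k - j)‖ ^ 2
      = ((1 : ℝ) / ((M ^ k : ℕ) : ℝ)) * ∑ j ∈ Ck M A k, ∑ l ∈ Ck M A k,
        ‖Sl (M ^ k) (Ck M A k) ((l : ℝ) - j)‖ ^ 2 / ((M ^ k : ℕ) : ℝ) := by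
        congr 1
        exact Finset.sum_congr rfl fun j hj => Finset.sum_congr rfl fun l hl => step2 j hj l hl
    _ = Tq (M ^ k) (Ck M A k) / ((M ^ k : ℕ) : ℝ) ^ 2 := by
        rw [Tq]
        rw [show (∑ j ∈ Ck M A k, ∑ l ∈ Ck M A k,
            ‖Sl (M ^ k) (Ck M A k) ((l : ℝ) - j)‖ ^ 2 / ((M ^ k : ℕ) : ℝ))
          = (∑ j ∈ Ck M A k, ∑ l ∈ Ck M A k,
            ‖Sl (M ^ k) (Ck M A k) ((l : ℝ) - j)‖ ^ 2) / ((M ^ k : ℕ) : ℝ) from by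
            rw [Finset.sum_div]
            exact Finset.sum_congr rfl fun j _ => (Finset.sum_div _ _ _).symm]
        ring

/-- Submultiplicativity: `t_{k₁+k₂} ≤ t_{k₁} · t_{k₂}` for `k₁, k₂ ≥ 1`. -/
theorem stmt3 (M : ℕ) (hM : 2 ≤ M) (A : Finset ℕ) (hA : A ⊆ Finset.range M)
    (k₁ k₂ : ℕ) (hk₁ : 1 ≤ k₁) (hk₂ : 1 ≤ k₂) :
    tk M A (k₁ + k₂) ≤ tk M A k₁ * tk M A k₂ := by
  have hM1 : 1 ≤ M := by omega
  have hsub : ∀ k, Ck M A k ⊆ Finset.range (M ^ k) := Ck_subset_range M A hA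
  have h₁ : 0 < M ^ k₁ := Nat.pow_pos (by omega)
  have h₂ : 0 < M ^ k₂ := Nat.pow_pos (by omega)
  have hs₁ : ∀ f : ℕ → ℂ, ∑ c ∈ Ck M A (k₁ + k₂), f c
      = ∑ p ∈ (Ck M A k₁) ×ˢ (Ck M A k₂), f (p.1 + M ^ k₁ * p.2) :=
    fun f => sum_Ck_add M A hA k₁ k₂ f
  have hs₂ : ∀ f : ℕ → ℂ, ∑ c ∈ Ck M A (k₁ + k₂), f c
      = ∑ p ∈ (Ck M A k₂) ×ˢ (Ck M A k₁), f (p.1 + M ^ k₂ * p.2) := by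
    intro f
    have h := sum_Ck_add M A hA k₂ k₁ f
    rwa [add_comm k₂ k₁] at h
  have hkey : Tq (M ^ (k₁ + k₂)) (Ck M A (k₁ + k₂))
      ≤ Tq (M ^ k₁) (Ck M A k₁) * Tq (M ^ k₂) (Ck M A k₂) := by
    rw [pow_add]
    exact key (M ^ k₁) (M ^ k₂) h₁ h₂ _ _ _ hs₁ hs₂
  rw [tk_eq M hM A hA hsub, tk_eq M hM A hA hsub, tk_eq M hM A hA hsub]
  have hd : ((M ^ (k₁ + k₂) : ℕ) : ℝ) ^ 2 = ((M ^ k₁ : ℕ) : ℝ) ^ 2 * ((M ^ k₂ : ℕ) : ℝ) ^ 2 := by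
    push_cast [pow_add]; ring
  rw [hd, div_mul_div_comm]
  have hD : (0 : ℝ) < ((M ^ k₁ : ℕ) : ℝ) ^ 2 * ((M ^ k₂ : ℕ) : ℝ) ^ 2 := by
    have a1 : (0 : ℝ) < ((M ^ k₁ : ℕ) : ℝ) := by exact_mod_cast h₁
    have a2 : (0 : ℝ) < ((M ^ k₂ : ℕ) : ℝ) := by exact_mod_cast h₂
    positivity
  exact (div_le_div_iff_of_pos_right hD).mpr hkey
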